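/- arXiv:2501.11399 — 3 statements merged into one kernel-verified Lean document; each statement's English description precedes it below -/
import Mathlib

section
/- With notation as in the previous statement (pᵢ = 1 case), the subgroup Z generated by z̃₁,…,z̃ₙ has rank n and λ restricted to Z × Z is trivial; hence the maximal rank of a subgroup of A on which λ is trivial is exactly n. -/
open Module Submodule TensorProduct

/-- For finitely many nonzero vectors in a `ℚ`-vector space there is a linear functional
that is nonzero on all of them. -/
lemma exists_dual_ne_zero {V : Type*} [AddCommGroup V] [Module ℚ V] {n : ℕ}
    (x : Fin n → V) (hx : ∀ i, x i ≠ 0) :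
    ∃ f : V →ₗ[ℚ] ℚ, ∀ i, f (x i) ≠ 0 := by
  classical
  suffices h : ∀ s : Finset (Fin n), ∃ f : V →ₗ[ℚ] ℚ, ∀ i ∈ s, f (x i) ≠ 0 by
    obtain ⟨f, hf⟩ := h Finset.univ
    exact ⟨f, fun i => hf i (Finset.mem_univ i)⟩
  intro s
  induction s using Finset.induction_on with
  | empty => exact ⟨0, by simp⟩
  | @insert a s ha ih =>
    obtain ⟨f, hf⟩ := ih
    have hga : ∃ g : V →ₗ[ℚ] ℚ, g (x a) ≠ 0 := by
      by_contra h
      push_neg at h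
      exact hx a ((Module.forall_dual_apply_eq_zero_iff ℚ (x a)).mp h)
    obtain ⟨g, hg⟩ := hga
    obtain ⟨c, hc⟩ := Infinite.exists_notMem_finset
      ((insert a s).image fun i => -(f (x i)) / (g (x i)))
    refine ⟨f + c • g, ?_⟩
    intro i hi
    simp only [LinearMap.add_apply, LinearMap.smul_apply, smul_eq_mul]
    by_cases hgi : g (x i) = 0
    · rcases Finset.mem_insert.mp hi with rfl | his
      · exact absurd hgi hg
      · simpa [hgi] using hf i his
    · intro hzero
      apply hc
      refine Finset.mem_image.mpr ⟨i, hi, ?_⟩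
      field_simp
      linarith [hzero]

/-- Case `pᵢ = 1`: the subgroup `Z` generated by `z̃₁,…,z̃ₙ` has rank `n` and `λ` is
trivial on it; hence the maximal rank of a subgroup of `A` on which `λ` is trivial is
exactly `n`. -/
theorem isotropic_max_rank_pi_one
    (K : Type*) [Field K] (n : ℕ)
    (q : Fin n → Kˣ) (γ : Fin n → Fin n → Kˣ)
    (hq : ∀ i, ∀ k : ℤ, k ≠ 0 → (q i) ^ k ≠ 1)
    (lam : ((Fin n → ℤ) × (Fin n → ℤ)) → ((Fin n → ℤ) × (Fin n → ℤ)) → Kˣ)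
    (hbil : ∀ a b c, lam a (b + c) = lam a b * lam a c)
    (hskew : ∀ a b, lam b a = (lam a b)⁻¹)
    (hzz : ∀ i j : Fin n, lam (Pi.single i 1, 0) (Pi.single j 1, 0) = 1)
    (hzy : ∀ i j : Fin n,
      lam (Pi.single j 1, 0) (0, Pi.single i 1) = if i ≤ j then q i else 1)
    (hyy : ∀ i j : Fin n, lam (0, Pi.single i 1) (0, Pi.single j 1) = γ i j) :
    (Module.finrank ℤ (AddSubgroup.toIntSubmodule
        (AddSubgroup.closure {v | ∃ i : Fin n, v = ((Pi.single i 1 : Fin n → ℤ), (0 : Fin n → ℤ))})) = n ∧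
      ∀ b ∈ AddSubgroup.closure {v | ∃ i : Fin n, v = ((Pi.single i 1 : Fin n → ℤ), (0 : Fin n → ℤ))},
        ∀ b' ∈ AddSubgroup.closure {v | ∃ i : Fin n, v = ((Pi.single i 1 : Fin n → ℤ), (0 : Fin n → ℤ))},
          lam b b' = 1) ∧
    IsGreatest {r : ℕ | ∃ B : AddSubgroup ((Fin n → ℤ) × (Fin n → ℤ)),
      (∀ b ∈ B, ∀ b' ∈ B, lam b b' = 1) ∧
      Module.finrank ℤ (AddSubgroup.toIntSubmodule B) = r} n := by
  classical
  -- Basic consequences of bilinearity and skewness.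
  have lam_zero_right : ∀ v, lam v 0 = 1 := by
    intro v
    have h := hbil v 0 0
    rw [add_zero] at h
    exact (left_eq_mul.mp h)
  have lam_zero_left : ∀ v, lam 0 v = 1 := by
    intro v; rw [hskew v 0, lam_zero_right, inv_one]
  have lam_add_left : ∀ a b c, lam (a + b) c = lam a c * lam b c := by
    intro a b c
    rw [hskew c (a + b), hbil c a b, mul_inv, ← hskew, ← hskew]
  have lam_neg_right : ∀ a b, lam a (-b) = (lam a b)⁻¹ := by
    intro a b
    have h := hbil a b (-b)
    rw [add_neg_cancel, lam_zero_right] at h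
    exact (eq_inv_of_mul_eq_one_right h.symm)
  have lam_neg_left : ∀ a b, lam (-a) b = (lam a b)⁻¹ := by
    intro a b
    rw [hskew b (-a), lam_neg_right b a, inv_inv, hskew a b]
  -- Part A.2 : λ is trivial on the closure of the z-generators.
  set Sz : Set ((Fin n → ℤ) × (Fin n → ℤ)) :=
    {v | ∃ i : Fin n, v = ((Pi.single i 1 : Fin n → ℤ), (0 : Fin n → ℤ))} with hSzdef
  have hiso : ∀ b ∈ AddSubgroup.closure Sz, ∀ b' ∈ AddSubgroup.closure Sz, lam b b' = 1 := by
    intro b hb b' hb'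
    refine AddSubgroup.closure_induction₂
      (fun x y hx hy => ?_) (fun x hx => lam_zero_left x) (fun x hx => lam_zero_right x)
      (fun x y z hx hy hz h1 h2 => by rw [lam_add_left, h1, h2, mul_one])
      (fun y z x hy hz hx h1 h2 => by rw [hbil, h1, h2, mul_one])
      (fun x y hx hy h => by rw [lam_neg_left, h, inv_one])
      (fun x y hx hy h => by rw [lam_neg_right, h, inv_one]) hb hb'
    obtain ⟨i, rfl⟩ := hx
    obtain ⟨j, rfl⟩ := hy
    exact hzz i j
  -- Part A.1 : the rank of the closure is n.
  have hZsub : AddSubgroup.toIntSubmodule (AddSubgroup.closure Sz) = span ℤ Sz := by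
    ext x
    change x ∈ AddSubgroup.closure Sz ↔ x ∈ span ℤ Sz
    rw [← Submodule.span_int_eq_addSubgroupClosure]
    rfl
  have hSzrange :
      Sz = Set.range (fun i : Fin n => ((Pi.single i 1 : Fin n → ℤ), (0 : Fin n → ℤ))) := by
    ext v
    simp only [hSzdef, Set.mem_setOf_eq, Set.mem_range, eq_comm]
  set bA : Basis (Fin n ⊕ Fin n) ℤ ((Fin n → ℤ) × (Fin n → ℤ)) :=
    (Pi.basisFun ℤ (Fin n)).prod (Pi.basisFun ℤ (Fin n)) with hbAdef
  have hbAinl : ∀ i : Fin n,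
      bA (Sum.inl i) = ((Pi.single i 1 : Fin n → ℤ), (0 : Fin n → ℤ)) := by
    intro i
    refine Prod.ext ?_ ?_
    · rw [Basis.prod_apply_inl_fst, Pi.basisFun_apply]
    · rw [Basis.prod_apply_inl_snd]
  have hbAinr : ∀ i : Fin n,
      bA (Sum.inr i) = ((0 : Fin n → ℤ), (Pi.single i 1 : Fin n → ℤ)) := by
    intro i
    refine Prod.ext ?_ ?_
    · rw [Basis.prod_apply_inr_fst]
    · rw [Basis.prod_apply_inr_snd, Pi.basisFun_apply]
  have hli : LinearIndependent ℤ
      (fun i : Fin n => ((Pi.single i 1 : Fin n → ℤ), (0 : Fin n → ℤ))) := by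
    have h := bA.linearIndependent.comp Sum.inl Sum.inl_injective
    have : (fun i : Fin n => bA (Sum.inl i))
        = fun i : Fin n => ((Pi.single i 1 : Fin n → ℤ), (0 : Fin n → ℤ)) := by
      funext i; exact hbAinl i
    rwa [Function.comp_def, this] at h
  have hfinrankZ : Module.finrank ℤ
      (AddSubgroup.toIntSubmodule (AddSubgroup.closure Sz)) = n := by
    rw [hZsub, hSzrange, finrank_span_eq_card hli, Fintype.card_fin]
  refine ⟨⟨hfinrankZ, hiso⟩, ⟨⟨AddSubgroup.closure Sz, hiso, hfinrankZ⟩, ?_⟩⟩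
  -- Part C : upper bound.
  rintro r ⟨B, hBiso, hBrank⟩
  -- Construct an additive functional φ : Kˣ → ℚ nonvanishing on the qᵢ.
  haveI hflat : Module.Flat ℤ ℚ := IsLocalization.flat ℚ (nonZeroDivisors ℤ)
  have hne : ∀ i : Fin n,
      ((1 : ℚ) ⊗ₜ[ℤ] (Additive.ofMul (q i)) : ℚ ⊗[ℤ] (Additive Kˣ)) ≠ 0 := by
    intro i
    set g : Additive Kˣ := Additive.ofMul (q i) with hgdef
    have hinj : Function.Injective ((zmultiplesHom (Additive Kˣ)) g) := by
      intro k l h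
      simp only [zmultiplesHom_apply] at h
      by_contra hkl
      have hsub : (k - l) • g ≠ 0 := by
        intro h0
        apply hq i (k - l) (sub_ne_zero.mpr hkl)
        have : Additive.ofMul ((q i) ^ (k - l)) = Additive.ofMul (1 : Kˣ) := by
          rw [ofMul_zpow]; exact h0
        exact Additive.ofMul.injective this
      exact hsub (by rw [sub_smul, h, sub_self])
    have hTinj : Function.Injective
        (LinearMap.lTensor ℚ ((zmultiplesHom (Additive Kˣ)) g).toIntLinearMap) :=
      Module.Flat.lTensor_preserves_injective_linearMap _ hinj
    intro h0
    have h1 : (LinearMap.lTensor ℚ ((zmultiplesHom (Additive Kˣ)) g).toIntLinearMap)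
        ((1 : ℚ) ⊗ₜ[ℤ] (1 : ℤ)) = 0 := by
      rw [LinearMap.lTensor_tmul]
      simpa [zmultiplesHom_apply] using h0
    have h2 : ((1 : ℚ) ⊗ₜ[ℤ] (1 : ℤ) : ℚ ⊗[ℤ] ℤ) = 0 := by
      apply hTinj
      rw [h1, map_zero]
    have h3 := congrArg (TensorProduct.rid ℤ ℚ) h2
    rw [TensorProduct.rid_tmul, map_zero, one_smul] at h3
    exact one_ne_zero h3
  obtain ⟨f, hf⟩ := exists_dual_ne_zero
    (fun i : Fin n => ((1 : ℚ) ⊗ₜ[ℤ] (Additive.ofMul (q i)) : ℚ ⊗[ℤ] (Additive Kˣ))) hne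
  let φ : Kˣ → ℚ := fun u => f ((1 : ℚ) ⊗ₜ[ℤ] (Additive.ofMul u))
  have hφdef : φ = fun u => f ((1 : ℚ) ⊗ₜ[ℤ] (Additive.ofMul u)) := rfl
  have hφmul : ∀ u v : Kˣ, φ (u * v) = φ u + φ v := by
    intro u v
    have : Additive.ofMul (u * v) = Additive.ofMul u + Additive.ofMul v := rfl
    simp only [hφdef, this, TensorProduct.tmul_add, map_add]
  have hφone : φ 1 = 0 := by
    have : Additive.ofMul (1 : Kˣ) = 0 := rfl
    simp only [hφdef, this, TensorProduct.tmul_zero, map_zero]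
  have hφinv : ∀ u : Kˣ, φ u⁻¹ = -φ u := by
    intro u
    have h := hφmul u u⁻¹
    rw [mul_inv_cancel, hφone] at h
    linarith
  have hφq : ∀ i, φ (q i) ≠ 0 := hf
  -- The scalar-valued bilinear form.
  let Sm : Matrix (Fin n) (Fin n) ℚ := Matrix.of (fun j i => if i ≤ j then φ (q i) else 0)
  have hSmdef : Sm = Matrix.of (fun j i => if i ≤ j then φ (q i) else 0) := rfl
  let Gm : Matrix (Fin n) (Fin n) ℚ := Matrix.of (fun i j => φ (γ i j))
  have hGmdef : Gm = Matrix.of (fun i j => φ (γ i j)) := rfl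
  let Vm : Matrix (Fin n ⊕ Fin n) (Fin n ⊕ Fin n) ℚ :=
    Matrix.fromBlocks 0 Sm (-Sm.transpose) Gm
  have hVmdef : Vm = Matrix.fromBlocks 0 Sm (-Sm.transpose) Gm := rfl
  let Bq := Matrix.toBilin' Vm
  have hBqdef : Bq = Matrix.toBilin' Vm := rfl
  have hγskew : ∀ i j, γ j i = (γ i j)⁻¹ := by
    intro i j
    have h := hskew (0, Pi.single i 1) (0, Pi.single j 1)
    rw [hyy, hyy] at h
    exact h
  have hGskew : ∀ i j, φ (γ j i) = -φ (γ i j) := by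
    intro i j; rw [hγskew i j, hφinv]
  have hVskew : ∀ a b, Vm b a = -Vm a b := by
    rintro (i | i) (j | j)
    · simp only [hVmdef, Matrix.fromBlocks_apply₁₁, Matrix.zero_apply, neg_zero]
    · simp only [hVmdef, Matrix.fromBlocks_apply₂₁, Matrix.fromBlocks_apply₁₂,
        Matrix.neg_apply, Matrix.transpose_apply]
    · simp only [hVmdef, Matrix.fromBlocks_apply₁₂, Matrix.fromBlocks_apply₂₁,
        Matrix.neg_apply, Matrix.transpose_apply, neg_neg]
    · simp only [hVmdef, Matrix.fromBlocks_apply₂₂, hGmdef, Matrix.of_apply]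
      exact hGskew i j
  have hflip : ∀ x y, Bq y x = -Bq x y := by
    intro x y
    rw [hBqdef, Matrix.toBilin'_apply, Matrix.toBilin'_apply]
    rw [Finset.sum_comm]
    have hterm : ∀ i j, y i * Vm i j * x j = -(x j * Vm j i * y i) := by
      intro i j
      rw [hVskew j i]
      ring
    calc (∑ j : Fin n ⊕ Fin n, ∑ i : Fin n ⊕ Fin n, y i * Vm i j * x j)
        = ∑ j : Fin n ⊕ Fin n, ∑ i : Fin n ⊕ Fin n, -(x j * Vm j i * y i) := by
          refine Finset.sum_congr rfl fun j _ => Finset.sum_congr rfl fun i _ => hterm i j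
      _ = -∑ j : Fin n ⊕ Fin n, ∑ i : Fin n ⊕ Fin n, x j * Vm j i * y i := by
          simp only [Finset.sum_neg_distrib]
  have hrefl : Bq.IsRefl := by
    intro x y h
    rw [hflip x y, h, neg_zero]
  -- Nondegeneracy via the determinant.
  have hdetS : Sm.det = ∏ i, φ (q i) := by
    have htri : Sm.BlockTriangular OrderDual.toDual := by
      intro i j hij
      have hij' : i < j := hij
      simp only [hSmdef, Matrix.of_apply]
      rw [if_neg (not_le.mpr hij')]
    rw [Matrix.det_of_lowerTriangular Sm htri]
    refine Finset.prod_congr rfl fun i _ => ?_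
    simp [hSmdef]
  have hdetSne : Sm.det ≠ 0 := by
    rw [hdetS]
    exact Finset.prod_ne_zero_iff.mpr fun i _ => hφq i
  have hdet : Vm.det ≠ 0 := by
    have h1 : Vm = (Matrix.fromBlocks Sm 0 Gm (-Sm.transpose)) *
        (Matrix.fromBlocks 0 1 1 0) := by
      rw [Matrix.fromBlocks_multiply]
      simp [hVmdef]
    have hPP : ((Matrix.fromBlocks 0 1 1 0 : Matrix (Fin n ⊕ Fin n) (Fin n ⊕ Fin n) ℚ)) *
        (Matrix.fromBlocks 0 1 1 0) = 1 := by
      rw [Matrix.fromBlocks_multiply]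
      simp [← Matrix.fromBlocks_one]
    have hdetP : (Matrix.fromBlocks 0 1 1 0 : Matrix (Fin n ⊕ Fin n) (Fin n ⊕ Fin n) ℚ).det ≠ 0 := by
      intro h
      have := congrArg Matrix.det hPP
      rw [Matrix.det_mul, h, mul_zero, Matrix.det_one] at this
      exact zero_ne_one this
    rw [h1, Matrix.det_mul, Matrix.det_fromBlocks_zero₁₂]
    refine mul_ne_zero (mul_ne_zero hdetSne ?_) hdetP
    rw [Matrix.det_neg, Matrix.det_transpose]
    exact mul_ne_zero (pow_ne_zero _ (by norm_num)) hdetSne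
  have hnd : Bq.Nondegenerate :=
    Matrix.Nondegenerate.toBilin' (Matrix.nondegenerate_of_det_ne_zero hdet)
  -- The coefficient embedding.
  let ιL : ((Fin n → ℤ) × (Fin n → ℤ)) →ₗ[ℤ] ((Fin n ⊕ Fin n) → ℚ) :=
    (AddMonoidHom.mk' (fun p => Sum.elim (fun i => (p.1 i : ℚ)) (fun i => (p.2 i : ℚ)))
      (by
        intro p p'
        funext k
        cases k <;> simp)).toIntLinearMap
  have hιinl : ∀ i : Fin n,
      ιL ((Pi.single i 1 : Fin n → ℤ), (0 : Fin n → ℤ)) = Pi.single (Sum.inl i) 1 := by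
    intro i
    funext k
    cases k with
    | inl a =>
      show ((((Pi.single i 1 : Fin n → ℤ) a : ℤ)) : ℚ)
          = (Pi.single (Sum.inl i) (1 : ℚ) : (Fin n ⊕ Fin n) → ℚ) (Sum.inl a)
      simp [Pi.single_apply]
    | inr a =>
      show ((0 : ℚ)) = (Pi.single (Sum.inl i) (1 : ℚ) : (Fin n ⊕ Fin n) → ℚ) (Sum.inr a)
      simp [Pi.single_apply]
  have hιinr : ∀ i : Fin n,
      ιL ((0 : Fin n → ℤ), (Pi.single i 1 : Fin n → ℤ)) = Pi.single (Sum.inr i) 1 := by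
    intro i
    funext k
    cases k with
    | inl a =>
      show ((0 : ℚ)) = (Pi.single (Sum.inr i) (1 : ℚ) : (Fin n ⊕ Fin n) → ℚ) (Sum.inl a)
      simp [Pi.single_apply]
    | inr a =>
      show ((((Pi.single i 1 : Fin n → ℤ) a : ℤ)) : ℚ)
          = (Pi.single (Sum.inr i) (1 : ℚ) : (Fin n ⊕ Fin n) → ℚ) (Sum.inr a)
      simp [Pi.single_apply]
  -- The key compatibility: φ ∘ λ equals the scalar bilinear form.
  have hlam2 : ∀ v w w', φ (lam v (w + w')) = φ (lam v w) + φ (lam v w') := by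
    intro v w w'; rw [hbil, hφmul]
  let Fm : ((Fin n → ℤ) × (Fin n → ℤ)) → (((Fin n → ℤ) × (Fin n → ℤ)) →ₗ[ℤ] ℚ) :=
    fun v => (AddMonoidHom.mk' (fun w => φ (lam v w)) (hlam2 v)).toIntLinearMap
  have hFadd : ∀ v v', Fm (v + v') = Fm v + Fm v' := by
    intro v v'
    refine LinearMap.ext fun w => ?_
    show φ (lam (v + v') w) = φ (lam v w) + φ (lam v' w)
    rw [lam_add_left, hφmul]
  let L : ((Fin n → ℤ) × (Fin n → ℤ)) →ₗ[ℤ] (((Fin n → ℤ) × (Fin n → ℤ)) →ₗ[ℤ] ℚ) :=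
    (AddMonoidHom.mk' Fm hFadd).toIntLinearMap
  let Gf : ((Fin n → ℤ) × (Fin n → ℤ)) → (((Fin n → ℤ) × (Fin n → ℤ)) →ₗ[ℤ] ℚ) :=
    fun v => (AddMonoidHom.mk' (fun w => Bq (ιL v) (ιL w))
      (by intro w w'; simp [map_add])).toIntLinearMap
  have hGadd : ∀ v v', Gf (v + v') = Gf v + Gf v' := by
    intro v v'
    refine LinearMap.ext fun w => ?_
    show Bq (ιL (v + v')) (ιL w) = Bq (ιL v) (ιL w) + Bq (ιL v') (ιL w)
    simp [map_add]
  let N : ((Fin n → ℤ) × (Fin n → ℤ)) →ₗ[ℤ] (((Fin n → ℤ) × (Fin n → ℤ)) →ₗ[ℤ] ℚ) :=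
    (AddMonoidHom.mk' Gf hGadd).toIntLinearMap
  have hLN : L = N := by
    refine bA.ext fun i => bA.ext fun j => ?_
    show φ (lam (bA i) (bA j)) = Bq (ιL (bA i)) (ιL (bA j))
    cases i with
    | inl i' =>
      cases j with
      | inl j' =>
        rw [hbAinl, hbAinl, hzz, hφone, hιinl, hιinl, Matrix.toBilin'_single]
        simp [hVmdef]
      | inr j' =>
        rw [hbAinl, hbAinr, hzy j' i', hιinl, hιinr, Matrix.toBilin'_single]
        by_cases h : j' ≤ i' <;> simp [hVmdef, hSmdef, h, hφone]
    | inr i' =>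
      cases j with
      | inl j' =>
        rw [hbAinr, hbAinl,
          hskew ((Pi.single j' 1 : Fin n → ℤ), (0 : Fin n → ℤ)) _, hzy i' j', hφinv,
          hιinr, hιinl, Matrix.toBilin'_single]
        by_cases h : i' ≤ j' <;> simp [hVmdef, hSmdef, h, hφone]
      | inr j' =>
        rw [hbAinr, hbAinr, hyy, hιinr, hιinr, Matrix.toBilin'_single]
        simp [hVmdef, hGmdef]
  have key : ∀ v w, φ (lam v w) = Bq (ιL v) (ιL w) :=
    fun v w => LinearMap.congr_fun (LinearMap.congr_fun hLN v) w
  -- The isotropic subgroup gives an isotropic subspace.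
  obtain ⟨m, bB⟩ := Submodule.basisOfPid bA (AddSubgroup.toIntSubmodule B)
  have hrm : r = m := by
    rw [← hBrank, finrank_eq_card_basis bB, Fintype.card_fin]
  have hmem : ∀ k : Fin m, ((bB k : (AddSubgroup.toIntSubmodule B)) :
      (Fin n → ℤ) × (Fin n → ℤ)) ∈ B := fun k => (bB k).2
  let u : Fin m → ((Fin n ⊕ Fin n) → ℚ) := fun k => ιL ((bB k : _))
  have hιinj : Function.Injective ιL := by
    intro p p' h
    have h1 : ∀ i, ((p.1 i : ℚ)) = (p'.1 i : ℚ) := fun i => congrFun h (Sum.inl i)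
    have h2 : ∀ i, ((p.2 i : ℚ)) = (p'.2 i : ℚ) := fun i => congrFun h (Sum.inr i)
    refine Prod.ext ?_ ?_
    · funext i; exact_mod_cast h1 i
    · funext i; exact_mod_cast h2 i
  have hliu : LinearIndependent ℚ u := by
    have h1 : LinearIndependent ℤ
        (fun k : Fin m => ((bB k : (AddSubgroup.toIntSubmodule B)) :
          (Fin n → ℤ) × (Fin n → ℤ))) :=
      bB.linearIndependent.map' (AddSubgroup.toIntSubmodule B).subtype
        (Submodule.ker_subtype _)
    have h2 : LinearIndependent ℤ u :=
      h1.map' ιL (LinearMap.ker_eq_bot.mpr hιinj)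
    exact (LinearIndependent.iff_fractionRing ℤ ℚ).mp h2
  let W : Submodule ℚ ((Fin n ⊕ Fin n) → ℚ) := span ℚ (Set.range u)
  have hWdef : W = span ℚ (Set.range u) := rfl
  have hWrank : finrank ℚ W = m := by
    rw [hWdef, finrank_span_eq_card hliu, Fintype.card_fin]
  have hgen : ∀ k l : Fin m, Bq (u k) (u l) = 0 := by
    intro k l
    rw [show Bq (u k) (u l) = φ (lam ((bB k : _)) ((bB l : _))) from (key _ _).symm,
      hBiso _ (hmem k) _ (hmem l), hφone]
  have hWiso : ∀ y ∈ W, ∀ x ∈ W, Bq x y = 0 := by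
    intro y hy
    induction hy using Submodule.span_induction with
    | mem y0 hy0 =>
      intro x hx
      induction hx using Submodule.span_induction with
      | mem x0 hx0 =>
        obtain ⟨k, rfl⟩ := hx0
        obtain ⟨l, rfl⟩ := hy0
        exact hgen k l
      | zero => simp
      | add a b ha hb iha ihb => rw [map_add, LinearMap.add_apply, iha, ihb, add_zero]
      | smul c a ha iha => rw [map_smul, LinearMap.smul_apply, iha, smul_zero]
    | zero => intro x hx; simp
    | add a b ha hb iha ihb => intro x hx; rw [map_add, iha x hx, ihb x hx, add_zero]
    | smul c a ha iha => intro x hx; rw [map_smul, iha x hx, smul_zero]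
  have hWle : W ≤ Bq.orthogonal W := by
    intro x hx
    rw [LinearMap.BilinForm.mem_orthogonal_iff]
    intro y hy
    exact hWiso x hx y hy
  have horth := LinearMap.BilinForm.finrank_add_finrank_orthogonal hrefl W
  rw [LinearMap.BilinForm.orthogonal_top_eq_bot hnd, inf_bot_eq, finrank_bot, add_zero] at horth
  have hfr : finrank ℚ ((Fin n ⊕ Fin n) → ℚ) = n + n := by
    rw [Module.finrank_pi, Fintype.card_sum, Fintype.card_fin]
  have hmono : finrank ℚ W ≤ finrank ℚ (Bq.orthogonal W) := Submodule.finrank_mono hWle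
  rw [hWrank] at hmono
  rw [hWrank, hfr] at horth
  omega
end

section
/- Let R be a ring, M a right R-module, and x, y, c ∈ R satisfying x^k y = q^k y x^k + κ c x^{k-1} for some unit c of R and nonzero scalar κ in a central field K (where q, p ∈ K*, p ≠ q and q^k ≠ p^k for all k ≥ 1, κ = (q^k − p^k)/(q − p)·p^{1−k}). If m ∈ M satisfies m y = 0 and m x^k = 0, then m x^{k-1} = 0. Consequently, no nonzero element of M can be simultaneously torsion for both x and y at minimal exponents, i.e. a nonzero module over such a ring cannot be both {x^j}-torsion and {y^j}-torsion. -/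
open MulOpposite

lemma unit_smul_cancel {R : Type*} [Ring R] {M : Type*} [AddCommGroup M] [Module R M]
    {u : R} (hu : IsUnit u) {w : M} (h : u • w = 0) : w = 0 := by
  obtain ⟨v, rfl⟩ := hu
  calc w = ((↑v⁻¹ * ↑v : R)) • w := by simp
    _ = (↑v⁻¹ : R) • ((↑v : R) • w) := mul_smul _ _ _
    _ = 0 := by rw [h, smul_zero]

open MulOpposite in
/-- If `x^k y = q^k y x^k + ((q^k − p^k)/(q − p)) z x^{k−1}` with `z` invertible,
`z x = p⁻¹ x z`, and `q^k ≠ p^k` for all `k ≥ 1`, then a right-module element `m`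
with `m y = 0` and `m x^k = 0` satisfies `m x^{k−1} = 0`. -/
theorem torsion_step
    (K : Type*) [Field K] (R : Type*) [Ring R] [Algebra K R]
    (M : Type*) [AddCommGroup M] [Module Rᵐᵒᵖ M]
    (p q : K) (hp : p ≠ 0) (hq : q ≠ 0)
    (hpq : ∀ k : ℕ, 1 ≤ k → q ^ k ≠ p ^ k)
    (x y z : R) (hz : IsUnit z)
    (hzx : z * x = p⁻¹ • (x * z))
    (hform : ∀ k : ℕ, 1 ≤ k →
      x ^ k * y = q ^ k • (y * x ^ k) + ((q ^ k - p ^ k) / (q - p)) • (z * x ^ (k - 1)))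
    (k : ℕ) (hk : 1 ≤ k) (m : M)
    (hmy : op y • m = 0) (hmx : op (x ^ k) • m = 0) :
    op (x ^ (k - 1)) • m = 0 := by
  have hq1 : q ≠ p := fun h => hpq 1 le_rfl (by simp [h])
  have hz_pow : ∀ n : ℕ, z * x ^ n = (p⁻¹ ^ n) • (x ^ n * z) := by
    intro n
    induction n with
    | zero => simp
    | succ n ih =>
      rw [pow_succ, ← mul_assoc, ih, smul_mul_assoc, mul_assoc, hzx,
        mul_smul_comm, ← mul_assoc, ← pow_succ, smul_smul, ← pow_succ]
  have h1 : op (x ^ k * y) • m = 0 := by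
    rw [op_mul, mul_smul, hmx, smul_zero]
  rw [hform k hk] at h1
  rw [op_add, add_smul, op_smul, op_smul, op_mul, op_mul,
    Algebra.smul_def, Algebra.smul_def, mul_smul, mul_smul, mul_smul, hmy,
    smul_zero, smul_zero, zero_add, ← op_mul, hz_pow (k-1), op_smul,
    Algebra.smul_def, mul_smul, op_mul, mul_smul] at h1
  have hk1 : (q ^ k - p ^ k) / (q - p) ≠ 0 :=
    div_ne_zero (sub_ne_zero.mpr (hpq k hk)) (sub_ne_zero.mpr hq1)
  have hk2 : (p⁻¹ ^ (k-1) : K) ≠ 0 := pow_ne_zero _ (inv_ne_zero hp)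
  have u1 := unit_smul_cancel ((isUnit_iff_ne_zero.mpr hk1).map (algebraMap K Rᵐᵒᵖ)) h1
  have u2 := unit_smul_cancel ((isUnit_iff_ne_zero.mpr hk2).map (algebraMap K Rᵐᵒᵖ)) u1
  exact unit_smul_cancel hz.op u2
end

section
/- For the algebra K_n = K_{n,Γ}^{P,Q}(K), the elements z_i = Σ_{l ≤ i} (q_l − p_l) y_l x_l satisfy z_i z_j = z_j z_i for all i, j; z_j y_i = p_i y_i z_j for j < i and z_j y_i = q_i y_i z_j for j ≥ i; and z_j x_i = p_i^{-1} x_i z_j for j < i and z_j x_i = q_i^{-1} x_i z_j for j ≥ i. In particular each z_i is a normal element of K_n. -/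
theorem Kn_aux
    (K : Type*) [Field K] (A : Type*) [Ring A] [Algebra K A] (n : ℕ)
    (p q : Fin n → Kˣ) (γ : Fin n → Fin n → Kˣ)
    (hγanti : ∀ i j, γ i j * γ j i = 1)
    (x y : Fin n → A)
    (hxx : ∀ i j, i < j → x i * x j = ((q i : K) * ((p j : Kˣ)⁻¹ : Kˣ) * γ i j) • (x j * x i))
    (hyy : ∀ i j, i < j → y i * y j = ((γ i j : K)) • (y j * y i))
    (hxylt : ∀ i j, i < j → x i * y j = ((p j : K) * ((γ i j : Kˣ)⁻¹ : Kˣ)) • (y j * x i))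
    (hxygt : ∀ i j, j < i → x i * y j = ((q j : K) * ((γ i j : Kˣ)⁻¹ : Kˣ)) • (y j * x i))
    (hdiag : ∀ i, x i * y i - (q i : K) • (y i * x i) =
      ∑ l ∈ Finset.Iio i, ((q l : K) - (p l : K)) • (y l * x l))
    (z : Fin n → A)
    (hz : ∀ j, z j = ∑ l ∈ Finset.Iic j, ((q l : K) - (p l : K)) • (y l * x l)) :
    (∀ i j, z i * z j = z j * z i) ∧
    (∀ i j, j < i → z j * y i = (p i : K) • (y i * z j)) ∧
    (∀ i j, i ≤ j → z j * y i = (q i : K) • (y i * z j)) ∧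
    (∀ i j, j < i → z j * x i = (((p i)⁻¹ : Kˣ) : K) • (x i * z j)) ∧
    (∀ i j, i ≤ j → z j * x i = (((q i)⁻¹ : Kˣ) : K) • (x i * z j)) := by
  simp only [Units.val_inv_eq_inv_val] at hxx hxylt hxygt ⊢
  have hp0 : ∀ i, (p i : K) ≠ 0 := fun i => (p i).ne_zero
  have hq0 : ∀ i, (q i : K) ≠ 0 := fun i => (q i).ne_zero
  have hγ0 : ∀ i j, (γ i j : K) ≠ 0 := fun i j => (γ i j).ne_zero
  have hγ1 : ∀ i j, (γ i j : K) * (γ j i : K) = 1 := fun i j => by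
    have := congrArg (fun u : Kˣ => (u : K)) (hγanti i j); simpa using this
  have hγinv : ∀ i j, (γ i j : K)⁻¹ = (γ j i : K) := fun i j =>
    inv_eq_of_mul_eq_one_right (hγ1 i j)
  have rev : ∀ {a b : A} {s : K}, s ≠ 0 → a = s • b → b = s⁻¹ • a := by
    intro a b s hs h; rw [h, smul_smul, inv_mul_cancel₀ hs, one_smul]
  have hdiag' : ∀ i, x i * y i =
      (∑ l ∈ Finset.Iio i, ((q l : K) - (p l : K)) • (y l * x l)) + (q i : K) • (y i * x i) :=
    fun i => sub_eq_iff_eq_add.mp (hdiag i)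
  -- single-term commutation with y i
  have hwylt : ∀ l i, l < i → (y l * x l) * y i = (p i : K) • (y i * (y l * x l)) := by
    intro l i h
    calc y l * x l * y i = y l * (x l * y i) := by rw [mul_assoc]
      _ = ((p i : K) * (γ l i : K)⁻¹) • ((y l * y i) * x l) := by
          rw [hxylt l i h, mul_smul_comm, mul_assoc]
      _ = (((p i : K) * (γ l i : K)⁻¹) * (γ l i : K)) • (y i * (y l * x l)) := by
          rw [hyy l i h, smul_mul_assoc, smul_smul, mul_assoc (y i)]
      _ = (p i : K) • (y i * (y l * x l)) := by
          rw [mul_assoc, inv_mul_cancel₀ (hγ0 l i), mul_one]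
  have hwygt : ∀ l i, i < l → (y l * x l) * y i = (q i : K) • (y i * (y l * x l)) := by
    intro l i h
    have hyrev : y l * y i = ((γ i l : K))⁻¹ • (y i * y l) := rev (hγ0 i l) (hyy i l h)
    calc y l * x l * y i = y l * (x l * y i) := by rw [mul_assoc]
      _ = ((q i : K) * (γ l i : K)⁻¹) • ((y l * y i) * x l) := by
          rw [hxygt l i h, mul_smul_comm, mul_assoc]
      _ = (((q i : K) * (γ l i : K)⁻¹) * (γ i l : K)⁻¹) • (y i * (y l * x l)) := by
          rw [hyrev, smul_mul_assoc, smul_smul, mul_assoc (y i)]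
      _ = (q i : K) • (y i * (y l * x l)) := by
          congr 1
          rw [hγinv l i, hγinv i l, mul_assoc, hγ1 i l, mul_one]
  -- single-term commutation with x i
  have hwxlt : ∀ l i, l < i → (y l * x l) * x i = (p i : K)⁻¹ • (x i * (y l * x l)) := by
    intro l i h
    have hyx : y l * x i = ((q l : K) * (γ i l : K)⁻¹)⁻¹ • (x i * y l) :=
      rev (by simp [hq0 l, hγ0 i l]) (hxygt i l h)
    calc y l * x l * x i = y l * (x l * x i) := by rw [mul_assoc]
      _ = ((q l : K) * (p i : K)⁻¹ * (γ l i : K)) • ((y l * x i) * x l) := by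
          rw [hxx l i h, mul_smul_comm, mul_assoc (y l) (x i) (x l)]
      _ = (((q l : K) * (p i : K)⁻¹ * (γ l i : K)) * ((q l : K) * (γ i l : K)⁻¹)⁻¹) •
            (x i * (y l * x l)) := by
          rw [hyx, smul_mul_assoc, smul_smul, mul_assoc (x i)]
      _ = (p i : K)⁻¹ • (x i * (y l * x l)) := by
          congr 1
          rw [hγinv i l]
          field_simp
  have hwxgt : ∀ l i, i < l → (y l * x l) * x i = (q i : K)⁻¹ • (x i * (y l * x l)) := by
    intro l i h
    have hxxrev : x l * x i = ((q i : K) * (p l : K)⁻¹ * (γ i l : K))⁻¹ • (x i * x l) :=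
      rev (by simp [hq0 i, hp0 l, hγ0 i l]) (hxx i l h)
    have hyx : y l * x i = ((p l : K) * (γ i l : K)⁻¹)⁻¹ • (x i * y l) :=
      rev (by simp [hp0 l, hγ0 i l]) (hxylt i l h)
    calc y l * x l * x i = y l * (x l * x i) := by rw [mul_assoc]
      _ = (((q i : K) * (p l : K)⁻¹ * (γ i l : K))⁻¹) • ((y l * x i) * x l) := by
          rw [hxxrev, mul_smul_comm, mul_assoc (y l) (x i) (x l)]
      _ = ((((q i : K) * (p l : K)⁻¹ * (γ i l : K))⁻¹) * ((p l : K) * (γ i l : K)⁻¹)⁻¹) •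
            (x i * (y l * x l)) := by
          rw [hyx, smul_mul_assoc, smul_smul, mul_assoc (x i)]
      _ = (q i : K)⁻¹ • (x i * (y l * x l)) := by
          congr 1
          field_simp
  -- generic: a sum of terms each α-commuting with g, α-commutes with g
  have key : ∀ (s : Finset (Fin n)) (g : A) (α : K),
      (∀ l ∈ s, (y l * x l) * g = α • (g * (y l * x l))) →
      (∑ l ∈ s, ((q l : K) - (p l : K)) • (y l * x l)) * g
        = α • (g * ∑ l ∈ s, ((q l : K) - (p l : K)) • (y l * x l)) := by
    intro s g α h
    rw [Finset.sum_mul, Finset.mul_sum, Finset.smul_sum]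
    refine Finset.sum_congr rfl fun l hl => ?_
    rw [smul_mul_assoc, h l hl, mul_smul_comm, smul_smul, smul_smul, mul_comm α]
  -- z_j y_i for j < i
  have h2 : ∀ i j, j < i → z j * y i = (p i : K) • (y i * z j) := by
    intro i j hji
    rw [hz]
    exact key _ _ _ fun l hl => hwylt l i (lt_of_le_of_lt (Finset.mem_Iic.mp hl) hji)
  have h4 : ∀ i j, j < i → z j * x i = (p i : K)⁻¹ • (x i * z j) := by
    intro i j hji
    rw [hz]
    exact key _ _ _ fun l hl => hwxlt l i (lt_of_le_of_lt (Finset.mem_Iic.mp hl) hji)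
  -- splitting of the sum at i  (for i ≤ j)
  have hsplit : ∀ i j : Fin n, i ≤ j →
      z j = (((q i : K) - (p i : K)) • (y i * x i)
          + ∑ l ∈ Finset.Iio i, ((q l : K) - (p l : K)) • (y l * x l))
          + ∑ l ∈ Finset.Ioc i j, ((q l : K) - (p l : K)) • (y l * x l) := by
    intro i j hij
    have hu : Finset.Iic i ∪ Finset.Ioc i j = Finset.Iic j := by
      ext a
      simp only [Finset.mem_union, Finset.mem_Iic, Finset.mem_Ioc]
      omega
    have hd : Disjoint (Finset.Iic i) (Finset.Ioc i j) :=
      Finset.disjoint_left.mpr fun a ha hb =>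
        absurd (Finset.mem_Iic.mp ha) (not_le.mpr (Finset.mem_Ioc.mp hb).1)
    rw [hz, ← hu, Finset.sum_union hd, ← Finset.Iio_insert i,
      Finset.sum_insert (by simp)]
  have h3 : ∀ i j, i ≤ j → z j * y i = (q i : K) • (y i * z j) := by
    intro i j hij
    have e1 : (∑ l ∈ Finset.Iio i, ((q l : K) - (p l : K)) • (y l * x l)) * y i
        = (p i : K) • (y i * ∑ l ∈ Finset.Iio i, ((q l : K) - (p l : K)) • (y l * x l)) :=
      key _ _ _ fun l hl => hwylt l i (Finset.mem_Iio.mp hl)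
    have e2 : (∑ l ∈ Finset.Ioc i j, ((q l : K) - (p l : K)) • (y l * x l)) * y i
        = (q i : K) • (y i * ∑ l ∈ Finset.Ioc i j, ((q l : K) - (p l : K)) • (y l * x l)) :=
      key _ _ _ fun l hl => hwygt l i (Finset.mem_Ioc.mp hl).1
    have e3 : (y i * x i) * y i = (q i : K) • (y i * (y i * x i))
        + y i * ∑ l ∈ Finset.Iio i, ((q l : K) - (p l : K)) • (y l * x l) := by
      calc (y i * x i) * y i = y i * (x i * y i) := by rw [mul_assoc]
        _ = _ := by rw [hdiag' i, mul_add, mul_smul_comm]; rw [add_comm]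
    rw [hsplit i j hij, add_mul, add_mul, smul_mul_assoc, e1, e2, e3,
      mul_add, mul_add, mul_smul_comm]
    module
  have h5 : ∀ i j, i ≤ j → z j * x i = (q i : K)⁻¹ • (x i * z j) := by
    intro i j hij
    have e1 : (∑ l ∈ Finset.Iio i, ((q l : K) - (p l : K)) • (y l * x l)) * x i
        = (p i : K)⁻¹ • (x i * ∑ l ∈ Finset.Iio i, ((q l : K) - (p l : K)) • (y l * x l)) :=
      key _ _ _ fun l hl => hwxlt l i (Finset.mem_Iio.mp hl)
    have e2 : (∑ l ∈ Finset.Ioc i j, ((q l : K) - (p l : K)) • (y l * x l)) * x i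
        = (q i : K)⁻¹ • (x i * ∑ l ∈ Finset.Ioc i j, ((q l : K) - (p l : K)) • (y l * x l)) :=
      key _ _ _ fun l hl => hwxgt l i (Finset.mem_Ioc.mp hl).1
    have t : x i * (y i * x i)
        = (p i : K)⁻¹ • (x i * ∑ l ∈ Finset.Iio i, ((q l : K) - (p l : K)) • (y l * x l))
          + (q i : K) • ((y i * x i) * x i) := by
      calc x i * (y i * x i) = (x i * y i) * x i := by rw [mul_assoc]
        _ = _ := by rw [hdiag' i, add_mul, smul_mul_assoc, e1]
    have cancel : ∀ a b : A, (q i : K) • a = b → a = (q i : K)⁻¹ • b := by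
      intro a b h; rw [← h, smul_smul, inv_mul_cancel₀ (hq0 i), one_smul]
    rw [hsplit i j hij]
    refine cancel _ _ ?_
    rw [add_mul, add_mul, smul_mul_assoc, e1, e2, mul_add, mul_add, mul_smul_comm, t]
    match_scalars <;> (field_simp; try ring)
  have hzw : ∀ j l, z j * (y l * x l) = (y l * x l) * z j := by
    intro j l
    rcases le_or_gt l j with h | h
    · calc z j * (y l * x l) = (z j * y l) * x l := by rw [mul_assoc]
        _ = (q l : K) • (y l * (z j * x l)) := by rw [h3 l j h, smul_mul_assoc, mul_assoc]
        _ = (q l : K) • (y l * ((q l : K)⁻¹ • (x l * z j))) := by rw [h5 l j h]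
        _ = (y l * x l) * z j := by
            rw [mul_smul_comm, smul_smul, mul_inv_cancel₀ (hq0 l), one_smul, mul_assoc]
    · calc z j * (y l * x l) = (z j * y l) * x l := by rw [mul_assoc]
        _ = (p l : K) • (y l * (z j * x l)) := by rw [h2 l j h, smul_mul_assoc, mul_assoc]
        _ = (p l : K) • (y l * ((p l : K)⁻¹ • (x l * z j))) := by rw [h4 l j h]
        _ = (y l * x l) * z j := by
            rw [mul_smul_comm, smul_smul, mul_inv_cancel₀ (hp0 l), one_smul, mul_assoc]
  have h1 : ∀ i j, z i * z j = z j * z i := by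
    intro i j
    rw [hz i, Finset.sum_mul, Finset.mul_sum]
    refine Finset.sum_congr rfl fun l _ => ?_
    rw [smul_mul_assoc, mul_smul_comm, hzw j l]
  exact ⟨h1, h2, h3, h4, h5⟩


/-- In `K_n = K_{n,Γ}^{P,Q}(K)`, the elements `z_i = Σ_{l ≤ i} (q_l − p_l) y_l x_l`
commute with each other and skew-commute with the generators:
`z_j y_i = p_i y_i z_j` (`j < i`), `z_j y_i = q_i y_i z_j` (`j ≥ i`),
`z_j x_i = p_i⁻¹ x_i z_j` (`j < i`), `z_j x_i = q_i⁻¹ x_i z_j` (`j ≥ i`).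
In particular each `z_i` is normal. -/
theorem Kn_z_normal
    (K : Type*) [Field K] (A : Type*) [Ring A] [Algebra K A] (n : ℕ)
    (p q : Fin n → Kˣ) (γ : Fin n → Fin n → Kˣ)
    (hpq : ∀ i, p i ≠ q i)
    (hγdiag : ∀ i, γ i i = 1) (hγanti : ∀ i j, γ i j * γ j i = 1)
    (x y : Fin n → A)
    (hxx : ∀ i j, i < j → x i * x j = ((q i : K) * ((p j : Kˣ)⁻¹ : Kˣ) * γ i j) • (x j * x i))
    (hyy : ∀ i j, i < j → y i * y j = ((γ i j : K)) • (y j * y i))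
    (hxylt : ∀ i j, i < j → x i * y j = ((p j : K) * ((γ i j : Kˣ)⁻¹ : Kˣ)) • (y j * x i))
    (hxygt : ∀ i j, j < i → x i * y j = ((q j : K) * ((γ i j : Kˣ)⁻¹ : Kˣ)) • (y j * x i))
    (hdiag : ∀ i, x i * y i - (q i : K) • (y i * x i) =
      ∑ l ∈ Finset.Iio i, ((q l : K) - (p l : K)) • (y l * x l)) :
    (∀ i j : Fin n,
        (∑ l ∈ Finset.Iic i, ((q l : K) - (p l : K)) • (y l * x l)) *
          (∑ l ∈ Finset.Iic j, ((q l : K) - (p l : K)) • (y l * x l)) =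
        (∑ l ∈ Finset.Iic j, ((q l : K) - (p l : K)) • (y l * x l)) *
          (∑ l ∈ Finset.Iic i, ((q l : K) - (p l : K)) • (y l * x l))) ∧
    (∀ i j : Fin n, j < i →
        (∑ l ∈ Finset.Iic j, ((q l : K) - (p l : K)) • (y l * x l)) * y i =
          (p i : K) • (y i * ∑ l ∈ Finset.Iic j, ((q l : K) - (p l : K)) • (y l * x l))) ∧
    (∀ i j : Fin n, i ≤ j →
        (∑ l ∈ Finset.Iic j, ((q l : K) - (p l : K)) • (y l * x l)) * y i =
          (q i : K) • (y i * ∑ l ∈ Finset.Iic j, ((q l : K) - (p l : K)) • (y l * x l))) ∧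
    (∀ i j : Fin n, j < i →
        (∑ l ∈ Finset.Iic j, ((q l : K) - (p l : K)) • (y l * x l)) * x i =
          (((p i)⁻¹ : Kˣ) : K) • (x i * ∑ l ∈ Finset.Iic j, ((q l : K) - (p l : K)) • (y l * x l))) ∧
    (∀ i j : Fin n, i ≤ j →
        (∑ l ∈ Finset.Iic j, ((q l : K) - (p l : K)) • (y l * x l)) * x i =
          (((q i)⁻¹ : Kˣ) : K) • (x i * ∑ l ∈ Finset.Iic j, ((q l : K) - (p l : K)) • (y l * x l))) := by
  obtain ⟨h1, h2, h3, h4, h5⟩ :=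
    Kn_aux K A n p q γ hγanti x y hxx hyy hxylt hxygt hdiag
      (fun j => ∑ l ∈ Finset.Iic j, ((q l : K) - (p l : K)) • (y l * x l)) (fun j => rfl)
  exact ⟨h1, h2, h3, h4, h5⟩
end
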